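/- The set {A_σ : σ a permutation of {1,2,3}×{1,2,3}} of 3×3 transition matrices, considered up to permutation-conjugacy, has exactly 16 equivalence classes. -/

import Mathlib

/-- The permutation matrix of a permutation `σ` (entries in `ℕ`). -/
def permMat {n : Type*} [DecidableEq n] (σ : Equiv.Perm n) : Matrix n n ℕ :=
  fun i j => if σ j = i then 1 else 0

/-- Two square ℕ-valued matrices are permutation-conjugate if `T * A * T⁻¹ = B`
for some permutation matrix `T`, equivalently `T * A = B * T`. -/
def PermConj {n : Type*} [Fintype n] [DecidableEq n] (A B : Matrix n n ℕ) : Prop :=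
  ∃ σ : Equiv.Perm n, permMat σ * A = B * permMat σ

/-- The transition matrix of a permutation of `{1,2,3} × {1,2,3}`. -/
def Amat (σ : Equiv.Perm (Fin 3 × Fin 3)) : Matrix (Fin 3) (Fin 3) ℕ :=
  fun j k => (Finset.univ.filter (fun nm : Fin 3 × Fin 3 => σ (nm.1, k) = (j, nm.2))).card

/- ### Auxiliary material -/

instance decPC {n : Type*} [Fintype n] [DecidableEq n] (A B : Matrix n n ℕ) :
    Decidable (PermConj A B) := by unfold PermConj; infer_instance

theorem pm_mul (σ τ : Equiv.Perm (Fin 3)) :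
    permMat (σ * τ) = permMat σ * permMat τ := by revert σ τ; decide

theorem pm_inv (σ : Equiv.Perm (Fin 3)) :
    permMat σ⁻¹ * permMat σ = 1 ∧ permMat σ * permMat σ⁻¹ = 1 := by revert σ; decide

theorem pm_one : permMat (1 : Equiv.Perm (Fin 3)) = 1 := by decide

theorem permConj_refl (A : Matrix (Fin 3) (Fin 3) ℕ) : PermConj A A :=
  ⟨1, by rw [pm_one, one_mul, mul_one]⟩

theorem permConj_symm {A B : Matrix (Fin 3) (Fin 3) ℕ} (h : PermConj A B) : PermConj B A := by
  obtain ⟨σ, h⟩ := h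
  refine ⟨σ⁻¹, ?_⟩
  calc permMat σ⁻¹ * B = permMat σ⁻¹ * B * (permMat σ * permMat σ⁻¹) := by
        rw [(pm_inv σ).2, mul_one]
    _ = permMat σ⁻¹ * (B * permMat σ) * permMat σ⁻¹ := by simp only [mul_assoc]
    _ = permMat σ⁻¹ * (permMat σ * A) * permMat σ⁻¹ := by rw [h]
    _ = A * permMat σ⁻¹ := by rw [← mul_assoc, (pm_inv σ).1, one_mul]

theorem permConj_trans {A B C : Matrix (Fin 3) (Fin 3) ℕ}
    (h : PermConj A B) (h' : PermConj B C) : PermConj A C := by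
  obtain ⟨σ, h⟩ := h
  obtain ⟨τ, h'⟩ := h'
  refine ⟨τ * σ, ?_⟩
  rw [pm_mul]
  calc permMat τ * permMat σ * A = permMat τ * (B * permMat σ) := by rw [mul_assoc, h]
    _ = permMat τ * B * permMat σ := by rw [mul_assoc]
    _ = C * permMat τ * permMat σ := by rw [h']
    _ = C * (permMat τ * permMat σ) := by rw [mul_assoc]

/- ### Row and column sums of `Amat` -/

theorem amat_eq (σ : Equiv.Perm (Fin 3 × Fin 3)) (j k : Fin 3) :
    Amat σ j k = (Finset.univ.filter (fun n : Fin 3 => (σ (n, k)).1 = j)).card := by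
  unfold Amat
  refine Finset.card_nbij' (fun nm => nm.1) (fun n => (n, (σ (n, k)).2)) ?_ ?_ ?_ ?_
  · intro a ha
    simp only [Finset.mem_coe, Finset.mem_filter, Finset.mem_univ, true_and] at ha ⊢
    rw [ha]
  · intro n hn
    simp only [Finset.mem_coe, Finset.mem_filter, Finset.mem_univ, true_and] at hn ⊢
    exact Prod.ext hn rfl
  · intro a ha
    simp only [Finset.mem_coe, Finset.mem_filter, Finset.mem_univ, true_and] at ha
    show (a.1, (σ (a.1, k)).2) = a
    rw [ha]
  · intro n _; rfl

theorem colsum (σ : Equiv.Perm (Fin 3 × Fin 3)) (k : Fin 3) :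
    Amat σ 0 k + Amat σ 1 k + Amat σ 2 k = 3 := by
  have h := Finset.card_eq_sum_card_fiberwise
    (f := fun n : Fin 3 => (σ (n, k)).1) (s := Finset.univ) (t := Finset.univ) (by simp)
  rw [Finset.card_univ, Fintype.card_fin, Fin.sum_univ_three] at h
  rw [amat_eq, amat_eq, amat_eq]
  omega

theorem rowsum (σ : Equiv.Perm (Fin 3 × Fin 3)) (j : Fin 3) :
    Amat σ j 0 + Amat σ j 1 + Amat σ j 2 = 3 := by
  have key : ∑ k : Fin 3, (Finset.univ.filter (fun n : Fin 3 => (σ (n, k)).1 = j)).card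
      = (Finset.univ.filter (fun nk : Fin 3 × Fin 3 => (σ nk).1 = j)).card := by
    rw [Finset.card_eq_sum_card_fiberwise
      (f := fun nk : Fin 3 × Fin 3 => nk.2) (t := Finset.univ) (by simp)]
    refine Finset.sum_congr rfl ?_
    intro k _
    refine Finset.card_nbij' (fun n => (n, k)) (fun nk => nk.1) ?_ ?_ ?_ ?_
    · intro n hn
      simp only [Finset.mem_coe, Finset.mem_filter, Finset.mem_univ, true_and] at hn ⊢
      simp [hn]
    · intro nk hnk
      simp only [Finset.mem_coe, Finset.mem_filter, Finset.mem_univ, true_and] at hnk ⊢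
      obtain ⟨h1, h2⟩ := hnk
      subst h2
      exact h1
    · intro n _; rfl
    · intro nk hnk
      simp only [Finset.mem_coe, Finset.mem_filter, Finset.mem_univ, true_and] at hnk
      exact Prod.ext rfl hnk.2.symm
  have h3 : ∀ j : Fin 3, (Finset.univ.filter (fun p : Fin 3 × Fin 3 => p.1 = j)).card = 3 := by
    decide
  have key2 : (Finset.univ.filter (fun nk : Fin 3 × Fin 3 => (σ nk).1 = j)).card = 3 := by
    refine Eq.trans ?_ (h3 j)
    refine Finset.card_nbij' (fun nk => σ nk) (fun p => σ.symm p) ?_ ?_ ?_ ?_ <;>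
      intro a ha <;> simp_all
  rw [Fin.sum_univ_three] at key
  rw [amat_eq, amat_eq, amat_eq]
  omega

/- ### Representatives -/

def sigF : Fin 16 → Equiv.Perm (Fin 3 × Fin 3) :=
![ Equiv.swap (0,(0:Fin 3)) (2,0) * Equiv.swap (2,(0:Fin 3)) (2,2) * Equiv.swap (2,(2:Fin 3)) (0,2) * Equiv.swap (0,(1:Fin 3)) (1,0) * Equiv.swap (1,(0:Fin 3)) (2,1) * Equiv.swap (2,(1:Fin 3)) (1,2),
  Equiv.swap (0,(0:Fin 3)) (1,0) * Equiv.swap (1,(0:Fin 3)) (2,0) * Equiv.swap (2,(0:Fin 3)) (2,1) * Equiv.swap (2,(1:Fin 3)) (2,2) * Equiv.swap (2,(2:Fin 3)) (0,2) * Equiv.swap (0,(1:Fin 3)) (1,1) * Equiv.swap (1,(1:Fin 3)) (1,2),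
  Equiv.swap (0,(0:Fin 3)) (1,0) * Equiv.swap (1,(0:Fin 3)) (1,1) * Equiv.swap (1,(1:Fin 3)) (2,1) * Equiv.swap (2,(1:Fin 3)) (2,2) * Equiv.swap (2,(2:Fin 3)) (0,2) * Equiv.swap (0,(1:Fin 3)) (1,2),
  Equiv.swap (0,(0:Fin 3)) (1,0) * Equiv.swap (1,(0:Fin 3)) (1,1) * Equiv.swap (1,(1:Fin 3)) (2,1) * Equiv.swap (2,(1:Fin 3)) (2,2) * Equiv.swap (2,(2:Fin 3)) (0,2) * Equiv.swap (0,(1:Fin 3)) (2,0) * Equiv.swap (2,(0:Fin 3)) (1,2),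
  Equiv.swap (0,(0:Fin 3)) (1,0) * Equiv.swap (1,(0:Fin 3)) (2,0) * Equiv.swap (2,(0:Fin 3)) (2,1) * Equiv.swap (2,(1:Fin 3)) (2,2) * Equiv.swap (2,(2:Fin 3)) (1,2) * Equiv.swap (1,(2:Fin 3)) (0,2) * Equiv.swap (0,(2:Fin 3)) (0,1),
  Equiv.swap (0,(0:Fin 3)) (1,0) * Equiv.swap (1,(0:Fin 3)) (2,0) * Equiv.swap (2,(0:Fin 3)) (2,1) * Equiv.swap (2,(1:Fin 3)) (1,2) * Equiv.swap (1,(2:Fin 3)) (0,2) * Equiv.swap (0,(2:Fin 3)) (0,1),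
  Equiv.swap (0,(0:Fin 3)) (1,0) * Equiv.swap (1,(0:Fin 3)) (1,1) * Equiv.swap (1,(1:Fin 3)) (2,1) * Equiv.swap (2,(1:Fin 3)) (2,2) * Equiv.swap (2,(2:Fin 3)) (1,2) * Equiv.swap (1,(2:Fin 3)) (0,2) * Equiv.swap (0,(2:Fin 3)) (0,1),
  Equiv.swap (0,(0:Fin 3)) (1,0) * Equiv.swap (1,(0:Fin 3)) (1,1) * Equiv.swap (1,(1:Fin 3)) (1,2) * Equiv.swap (1,(2:Fin 3)) (0,2) * Equiv.swap (0,(2:Fin 3)) (0,1),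
  Equiv.swap (0,(1:Fin 3)) (1,0) * Equiv.swap (1,(0:Fin 3)) (2,0) * Equiv.swap (2,(0:Fin 3)) (2,1) * Equiv.swap (2,(1:Fin 3)) (1,2) * Equiv.swap (1,(2:Fin 3)) (0,2),
  Equiv.swap (0,(1:Fin 3)) (1,1) * Equiv.swap (1,(1:Fin 3)) (1,2) * Equiv.swap (1,(2:Fin 3)) (0,2),
  Equiv.swap (0,(1:Fin 3)) (1,2) * Equiv.swap (1,(2:Fin 3)) (0,2) * Equiv.swap (1,(1:Fin 3)) (2,0),
  1,
  Equiv.swap (1,(2:Fin 3)) (2,1),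
  Equiv.swap (0,(1:Fin 3)) (1,0) * Equiv.swap (1,(2:Fin 3)) (2,1),
  Equiv.swap (0,(1:Fin 3)) (1,1) * Equiv.swap (1,(1:Fin 3)) (1,2) * Equiv.swap (1,(2:Fin 3)) (2,1) * Equiv.swap (2,(1:Fin 3)) (2,0) * Equiv.swap (2,(0:Fin 3)) (1,0),
  Equiv.swap (0,(1:Fin 3)) (1,0) * Equiv.swap (0,(2:Fin 3)) (2,0) * Equiv.swap (1,(2:Fin 3)) (2,1) ]

def MrepF : Fin 16 → Matrix (Fin 3) (Fin 3) ℕ :=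
![ !![0, 0, 3; 0, 3, 0; 3, 0, 0],
  !![0, 0, 3; 1, 2, 0; 2, 1, 0],
  !![0, 0, 3; 2, 1, 0; 1, 2, 0],
  !![0, 0, 3; 3, 0, 0; 0, 3, 0],
  !![0, 1, 2; 1, 1, 1; 2, 1, 0],
  !![0, 1, 2; 1, 2, 0; 2, 0, 1],
  !![0, 1, 2; 2, 0, 1; 1, 2, 0],
  !![0, 1, 2; 2, 1, 0; 1, 1, 1],
  !![1, 0, 2; 0, 3, 0; 2, 0, 1],
  !![1, 0, 2; 1, 2, 0; 1, 1, 1],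
  !![1, 0, 2; 2, 1, 0; 0, 2, 1],
  !![1, 1, 1; 1, 1, 1; 1, 1, 1],
  !![1, 1, 1; 1, 2, 0; 1, 0, 2],
  !![2, 0, 1; 0, 3, 0; 1, 0, 2],
  !![2, 0, 1; 1, 2, 0; 0, 1, 2],
  !![3, 0, 0; 0, 3, 0; 0, 0, 3] ]

set_option maxRecDepth 100000 in
theorem hAM : ∀ i : Fin 16, Amat (sigF i) = MrepF i := by decide

set_option maxRecDepth 100000 in
theorem inj16 : ∀ i j : Fin 16, PermConj (MrepF i) (MrepF j) → i = j := by decide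

def TL : List (ℕ × ℕ × ℕ) :=
  [(0,0,3),(0,1,2),(0,2,1),(0,3,0),(1,0,2),(1,1,1),(1,2,0),(2,0,1),(2,1,0),(3,0,0)]

theorem mem_TL (x y z : ℕ) (h : x + y + z = 3) : (x, y, z) ∈ TL := by
  have hx : x ≤ 3 := by omega
  have hy : y ≤ 3 := by omega
  interval_cases x <;> interval_cases y <;> simp [TL, Prod.ext_iff] <;> omega

def mkM (a b c : ℕ × ℕ × ℕ) : Matrix (Fin 3) (Fin 3) ℕ :=
  !![a.1, b.1, c.1; a.2.1, b.2.1, c.2.1; a.2.2, b.2.2, c.2.2]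

set_option maxRecDepth 100000 in
theorem keyEnum : ∀ a ∈ TL, ∀ b ∈ TL, ∀ c ∈ TL,
    a.1 + b.1 + c.1 = 3 → a.2.1 + b.2.1 + c.2.1 = 3 → a.2.2 + b.2.2 + c.2.2 = 3 →
    ∃ i : Fin 16, PermConj (MrepF i) (mkM a b c) := by decide

theorem amat_conj (σ : Equiv.Perm (Fin 3 × Fin 3)) :
    ∃ i : Fin 16, PermConj (MrepF i) (Amat σ) := by
  have h0 := mem_TL _ _ _ (colsum σ 0)
  have h1 := mem_TL _ _ _ (colsum σ 1)
  have h2 := mem_TL _ _ _ (colsum σ 2)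
  obtain ⟨i, hi⟩ := keyEnum _ h0 _ h1 _ h2 (rowsum σ 0) (rowsum σ 1) (rowsum σ 2)
  refine ⟨i, ?_⟩
  have hmk : mkM (Amat σ 0 0, Amat σ 1 0, Amat σ 2 0) (Amat σ 0 1, Amat σ 1 1, Amat σ 2 1)
      (Amat σ 0 2, Amat σ 1 2, Amat σ 2 2) = Amat σ := by
    ext j k
    fin_cases j <;> fin_cases k <;> rfl
  rwa [hmk] at hi

/-- the set `{A_σ : σ ∈ 𝔖_{3,2}}` has exactly 16 classes up to
permutation-conjugacy. -/
theorem card_classes_Amat :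
    Nat.card (Quot (fun A B : {A : Matrix (Fin 3) (Fin 3) ℕ //
      ∃ σ : Equiv.Perm (Fin 3 × Fin 3), Amat σ = A} => PermConj A.1 B.1)) = 16 := by
  set r := (fun A B : {A : Matrix (Fin 3) (Fin 3) ℕ //
      ∃ σ : Equiv.Perm (Fin 3 × Fin 3), Amat σ = A} => PermConj A.1 B.1) with hr
  have hequiv : Equivalence r :=
    ⟨fun x => permConj_refl x.1, fun h => permConj_symm h, fun h h' => permConj_trans h h'⟩
  have hbij : Function.Bijective
      (fun i : Fin 16 => Quot.mk r ⟨MrepF i, sigF i, hAM i⟩) := by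
    constructor
    · intro i j h
      exact inj16 i j ((hequiv.eqvGen_iff).mp (Quot.eq.mp h))
    · intro x
      induction x using Quot.ind with
      | _ a =>
        obtain ⟨A, σ, hA⟩ := a
        subst hA
        obtain ⟨i, hi⟩ := amat_conj σ
        refine ⟨i, Quot.sound ?_⟩
        exact hi
  have e : Fin 16 ≃ Quot r :=
    Equiv.ofBijective (fun i : Fin 16 => Quot.mk r ⟨MrepF i, sigF i, hAM i⟩) hbij
  rw [← Nat.card_congr e]
  simp
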